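/- Let K ≥ 1 and define a : ℕ → ℚ by a(m)=1 for 1 ≤ m ≤ 2K+1 and the quadratic recurrence a(n)·a(n-(2K+1)) = a(n-1)·a(n-2K) + a(n-K) + a(n-K-1) for n ≥ 2K+2. Then a satisfies the linear recurrence a(n) = (2K²+8K+4)·(a(n-2K) - a(n-4K)) + a(n-6K) for all n ≥ 6K+2. -/

import Mathlib

set_option maxHeartbeats 1000000 in
theorem stmt6 (K : ℕ) (hK : 1 ≤ K) (a : ℕ → ℚ)
    (hinit : ∀ m, 1 ≤ m → m ≤ 2*K+1 → a m = 1)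
    (hrec : ∀ n, 2*K+2 ≤ n →
      a n * a (n-(2*K+1)) = a (n-1) * a (n-2*K) + a (n-K) + a (n-K-1)) :
    ∀ n, 6*K+2 ≤ n →
      a n = (2*(K:ℚ)^2 + 8*(K:ℚ) + 4) * (a (n-2*K) - a (n-4*K)) + a (n-6*K) := by
  have ha : ∀ {x y : ℕ}, x = y → a x = a y := fun h => by rw [h]
  have hrec' : ∀ j, 1 ≤ j →
      a (2*K+1+j) * a j = a (2*K+j) * a (j+1) + a (K+1+j) + a (K+j) := by
    intro j hj
    have h := hrec (2*K+1+j) (by omega)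
    rw [show 2*K+1+j-(2*K+1) = j from by omega,
        show 2*K+1+j-1 = 2*K+j from by omega,
        show 2*K+1+j-2*K = j+1 from by omega,
        show 2*K+1+j-K = K+1+j from by omega,
        show K+1+j-1 = K+j from by omega] at h
    exact h
  have hpos : ∀ n, 1 ≤ n → 0 < a n := by
    intro n
    induction n using Nat.strong_induction_on with
    | _ n IH =>
      intro hn
      by_cases h : n ≤ 2*K+1
      · rw [hinit n hn h]; norm_num
      · push_neg at h
        obtain ⟨j, hj1, rfl⟩ : ∃ j, 1 ≤ j ∧ n = 2*K+1+j := ⟨n-(2*K+1), by omega, by omega⟩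
        have e := hrec' j hj1
        have p1 := IH j (by omega) (by omega)
        have p2 := IH (2*K+j) (by omega) (by omega)
        have p3 := IH (j+1) (by omega) (by omega)
        have p4 := IH (K+1+j) (by omega) (by omega)
        have p5 := IH (K+j) (by omega) (by omega)
        have hr : 0 < a (2*K+1+j) * a j := by
          rw [e]; positivity
        rcases mul_pos_iff.mp hr with ⟨h1,_⟩|⟨_,h2⟩
        · exact h1
        · linarith
  have h2 : ∀ j, j ≤ K → a (2*K+1+j) = 2*(j:ℚ)+1 := by
    intro j
    induction j with
    | zero => intro _; rw [hinit (2*K+1+0) (by omega) (by omega)]; norm_num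
    | succ j ih =>
      intro hj
      have hj' : j ≤ K := by omega
      have e := hrec' (j+1) (by omega)
      rw [ha (show 2*K+1+(j+1) = 2*K+2+j from by omega),
          ha (show 2*K+(j+1) = 2*K+1+j from by omega),
          hinit (j+1) (by omega) (by omega),
          hinit (j+1+1) (by omega) (by omega),
          hinit (K+1+(j+1)) (by omega) (by omega),
          hinit (K+(j+1)) (by omega) (by omega),
          ih hj'] at e
      rw [ha (show 2*K+1+(j+1) = 2*K+2+j from by omega)]
      push_cast at e ⊢
      linear_combination e
  have h3 : ∀ j, j ≤ K → a (3*K+1+j) = 2*(j:ℚ)^2+2*(j:ℚ)+2*(K:ℚ)+1 := by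
    intro j
    induction j with
    | zero =>
      intro _
      rw [ha (show 3*K+1+0 = 2*K+1+K from by omega), h2 K le_rfl]
      push_cast; ring
    | succ j ih =>
      intro hj
      have hj' : j ≤ K := by omega
      have e := hrec' (K+1+j) (by omega)
      rw [ha (show 2*K+1+(K+1+j) = 3*K+2+j from by omega),
          ha (show 2*K+(K+1+j) = 3*K+1+j from by omega),
          ha (show K+1+j+1 = K+(j+2) from by omega),
          ha (show K+1+(K+1+j) = 2*K+1+(j+1) from by omega),
          ha (show K+(K+1+j) = 2*K+1+j from by omega),
          hinit (K+1+j) (by omega) (by omega),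
          hinit (K+(j+2)) (by omega) (by omega),
          h2 (j+1) hj, h2 j hj', ih hj'] at e
      rw [ha (show 3*K+1+(j+1) = 3*K+2+j from by omega)]
      push_cast at e ⊢
      linear_combination e
  have h4 : ∀ j, j ≤ K → a (4*K+1+j) = 2*(j:ℚ)^2+(4*(K:ℚ)^2+12*(K:ℚ)+6)*(j:ℚ)+2*(K:ℚ)^2+4*(K:ℚ)+1 := by
    intro j
    induction j with
    | zero =>
      intro _
      rw [ha (show 4*K+1+0 = 3*K+1+K from by omega), h3 K le_rfl]
      push_cast; ring
    | succ j ih =>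
      intro hj
      have hj' : j ≤ K := by omega
      have e := hrec' (2*K+1+j) (by omega)
      rw [ha (show 2*K+1+(2*K+1+j) = 4*K+2+j from by omega),
          ha (show 2*K+(2*K+1+j) = 4*K+1+j from by omega),
          ha (show 2*K+1+j+1 = 2*K+1+(j+1) from by omega),
          ha (show K+1+(2*K+1+j) = 3*K+1+(j+1) from by omega),
          ha (show K+(2*K+1+j) = 3*K+1+j from by omega),
          h2 (j+1) hj, h2 j hj', h3 (j+1) hj, h3 j hj', ih hj'] at e
      rw [ha (show 4*K+1+(j+1) = 4*K+2+j from by omega)]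
      have hD : (0:ℚ) < 2*(j:ℚ)+1 := by positivity
      apply mul_right_cancel₀ (ne_of_gt hD)
      push_cast at e ⊢
      linear_combination e
  have h5 : ∀ j, j ≤ K → a (5*K+1+j) = (4*(K:ℚ)^2+16*(K:ℚ)+8)*(j:ℚ)^2+(4*(K:ℚ)^2+16*(K:ℚ)+6)*(j:ℚ)+4*(K:ℚ)^3+16*(K:ℚ)^2+10*(K:ℚ)+1 := by
    intro j
    induction j with
    | zero =>
      intro _
      rw [ha (show 5*K+1+0 = 4*K+1+K from by omega), h4 K le_rfl]
      push_cast; ring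
    | succ j ih =>
      intro hj
      have hj' : j ≤ K := by omega
      have e := hrec' (3*K+1+j) (by omega)
      rw [ha (show 2*K+1+(3*K+1+j) = 5*K+2+j from by omega),
          ha (show 2*K+(3*K+1+j) = 5*K+1+j from by omega),
          ha (show 3*K+1+j+1 = 3*K+1+(j+1) from by omega),
          ha (show K+1+(3*K+1+j) = 4*K+1+(j+1) from by omega),
          ha (show K+(3*K+1+j) = 4*K+1+j from by omega),
          h3 (j+1) hj, h3 j hj', h4 (j+1) hj, h4 j hj', ih hj'] at e
      rw [ha (show 5*K+1+(j+1) = 5*K+2+j from by omega)]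
      have hD : (0:ℚ) < 2*(j:ℚ)^2+2*(j:ℚ)+2*(K:ℚ)+1 := by positivity
      apply mul_right_cancel₀ (ne_of_gt hD)
      push_cast at e ⊢
      linear_combination e
  have h6 : ∀ j, j ≤ K → a (6*K+1+j) = (4*(K:ℚ)^2+16*(K:ℚ)+8)*(j:ℚ)^2+(8*(K:ℚ)^4+56*(K:ℚ)^3+120*(K:ℚ)^2+80*(K:ℚ)+16)*(j:ℚ)+4*(K:ℚ)^4+24*(K:ℚ)^3+40*(K:ℚ)^2+16*(K:ℚ)+1 := by
    intro j
    induction j with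
    | zero =>
      intro _
      rw [ha (show 6*K+1+0 = 5*K+1+K from by omega), h5 K le_rfl]
      push_cast; ring
    | succ j ih =>
      intro hj
      have hj' : j ≤ K := by omega
      have e := hrec' (4*K+1+j) (by omega)
      rw [ha (show 2*K+1+(4*K+1+j) = 6*K+2+j from by omega),
          ha (show 2*K+(4*K+1+j) = 6*K+1+j from by omega),
          ha (show 4*K+1+j+1 = 4*K+1+(j+1) from by omega),
          ha (show K+1+(4*K+1+j) = 5*K+1+(j+1) from by omega),
          ha (show K+(4*K+1+j) = 5*K+1+j from by omega),
          h4 (j+1) hj, h4 j hj', h5 (j+1) hj, h5 j hj', ih hj'] at e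
      rw [ha (show 6*K+1+(j+1) = 6*K+2+j from by omega)]
      have hD : (0:ℚ) < 2*(j:ℚ)^2+(4*(K:ℚ)^2+12*(K:ℚ)+6)*(j:ℚ)+2*(K:ℚ)^2+4*(K:ℚ)+1 := by positivity
      apply mul_right_cancel₀ (ne_of_gt hD)
      push_cast at e ⊢
      linear_combination e
  have h7 : ∀ j, j ≤ K → a (7*K+1+j) = (8*(K:ℚ)^4+64*(K:ℚ)^3+156*(K:ℚ)^2+112*(K:ℚ)+24)*(j:ℚ)^2+(8*(K:ℚ)^4+64*(K:ℚ)^3+152*(K:ℚ)^2+96*(K:ℚ)+16)*(j:ℚ)+8*(K:ℚ)^5+64*(K:ℚ)^4+160*(K:ℚ)^3+128*(K:ℚ)^2+32*(K:ℚ)+1 := by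
    intro j
    induction j with
    | zero =>
      intro _
      rw [ha (show 7*K+1+0 = 6*K+1+K from by omega), h6 K le_rfl]
      push_cast; ring
    | succ j ih =>
      intro hj
      have hj' : j ≤ K := by omega
      have e := hrec' (5*K+1+j) (by omega)
      rw [ha (show 2*K+1+(5*K+1+j) = 7*K+2+j from by omega),
          ha (show 2*K+(5*K+1+j) = 7*K+1+j from by omega),
          ha (show 5*K+1+j+1 = 5*K+1+(j+1) from by omega),
          ha (show K+1+(5*K+1+j) = 6*K+1+(j+1) from by omega),
          ha (show K+(5*K+1+j) = 6*K+1+j from by omega),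
          h5 (j+1) hj, h5 j hj', h6 (j+1) hj, h6 j hj', ih hj'] at e
      rw [ha (show 7*K+1+(j+1) = 7*K+2+j from by omega)]
      have hD : (0:ℚ) < (4*(K:ℚ)^2+16*(K:ℚ)+8)*(j:ℚ)^2+(4*(K:ℚ)^2+16*(K:ℚ)+6)*(j:ℚ)+4*(K:ℚ)^3+16*(K:ℚ)^2+10*(K:ℚ)+1 := by positivity
      apply mul_right_cancel₀ (ne_of_gt hD)
      push_cast at e ⊢
      linear_combination e
  have h8 : ∀ j, j ≤ K → a (8*K+1+j) = (8*(K:ℚ)^4+64*(K:ℚ)^3+156*(K:ℚ)^2+112*(K:ℚ)+24)*(j:ℚ)^2+(16*(K:ℚ)^6+176*(K:ℚ)^5+712*(K:ℚ)^4+1288*(K:ℚ)^3+1028*(K:ℚ)^2+352*(K:ℚ)+42)*(j:ℚ)+8*(K:ℚ)^6+80*(K:ℚ)^5+284*(K:ℚ)^4+424*(K:ℚ)^3+248*(K:ℚ)^2+48*(K:ℚ)+1 := by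
    intro j
    induction j with
    | zero =>
      intro _
      rw [ha (show 8*K+1+0 = 7*K+1+K from by omega), h7 K le_rfl]
      push_cast; ring
    | succ j ih =>
      intro hj
      have hj' : j ≤ K := by omega
      have e := hrec' (6*K+1+j) (by omega)
      rw [ha (show 2*K+1+(6*K+1+j) = 8*K+2+j from by omega),
          ha (show 2*K+(6*K+1+j) = 8*K+1+j from by omega),
          ha (show 6*K+1+j+1 = 6*K+1+(j+1) from by omega),
          ha (show K+1+(6*K+1+j) = 7*K+1+(j+1) from by omega),
          ha (show K+(6*K+1+j) = 7*K+1+j from by omega),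
          h6 (j+1) hj, h6 j hj', h7 (j+1) hj, h7 j hj', ih hj'] at e
      rw [ha (show 8*K+1+(j+1) = 8*K+2+j from by omega)]
      have hD : (0:ℚ) < (4*(K:ℚ)^2+16*(K:ℚ)+8)*(j:ℚ)^2+(8*(K:ℚ)^4+56*(K:ℚ)^3+120*(K:ℚ)^2+80*(K:ℚ)+16)*(j:ℚ)+4*(K:ℚ)^4+24*(K:ℚ)^3+40*(K:ℚ)^2+16*(K:ℚ)+1 := by positivity
      apply mul_right_cancel₀ (ne_of_gt hD)
      push_cast at e ⊢
      linear_combination e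
  have G : ∀ m, 2 ≤ m → a (6*K+m) = (2*(K:ℚ)^2 + 8*(K:ℚ) + 4) * (a (4*K+m) - a (2*K+m)) + a m := by
    intro m
    induction m using Nat.strong_induction_on with
    | _ m IH =>
      intro hm
      rcases lt_or_ge m (2*K+3) with hcase | hcase
      · rcases lt_or_ge m (K+2) with hc1 | hc1
        · obtain ⟨j, hj1, hjK, rfl⟩ : ∃ j, 1 ≤ j ∧ j ≤ K ∧ m = 1+j :=
            ⟨m-1, by omega, by omega, by omega⟩
          rw [ha (show 6*K+(1+j) = 6*K+1+j from by omega),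
              ha (show 4*K+(1+j) = 4*K+1+j from by omega),
              ha (show 2*K+(1+j) = 2*K+1+j from by omega),
              h6 j hjK, h4 j hjK, h2 j hjK, hinit (1+j) (by omega) (by omega)]
          ring
        · rcases lt_or_ge m (2*K+2) with hc2 | hc2
          · obtain ⟨j, hj1, hjK, rfl⟩ : ∃ j, 1 ≤ j ∧ j ≤ K ∧ m = K+1+j :=
              ⟨m-K-1, by omega, by omega, by omega⟩
            rw [ha (show 6*K+(K+1+j) = 7*K+1+j from by omega),
                ha (show 4*K+(K+1+j) = 5*K+1+j from by omega),
                ha (show 2*K+(K+1+j) = 3*K+1+j from by omega),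
                h7 j hjK, h5 j hjK, h3 j hjK, hinit (K+1+j) (by omega) (by omega)]
            ring
          · have hm' : m = 2*K+2 := by omega
            subst hm'
            rw [ha (show 6*K+(2*K+2) = 8*K+1+1 from by omega),
                ha (show 4*K+(2*K+2) = 6*K+1+1 from by omega),
                ha (show 2*K+(2*K+2) = 4*K+1+1 from by omega),
                ha (show 2*K+2 = 2*K+1+1 from by omega),
                h8 1 hK, h6 1 hK, h4 1 hK, h2 1 hK]
            push_cast; ring
      · obtain ⟨s, rfl⟩ : ∃ s, m = 2*K+3+s := ⟨m-(2*K+3), by omega⟩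
        have B1 := hrec' (6*K+2+s) (by omega)
        rw [ha (show 2*K+1+(6*K+2+s) = 8*K+3+s from by omega),
            ha (show 2*K+(6*K+2+s) = 8*K+2+s from by omega),
            ha (show 6*K+2+s+1 = 6*K+3+s from by omega),
            ha (show K+1+(6*K+2+s) = 7*K+3+s from by omega),
            ha (show K+(6*K+2+s) = 7*K+2+s from by omega)] at B1
        have B2 := hrec' (4*K+2+s) (by omega)
        rw [ha (show 2*K+1+(4*K+2+s) = 6*K+3+s from by omega),
            ha (show 2*K+(4*K+2+s) = 6*K+2+s from by omega),
            ha (show 4*K+2+s+1 = 4*K+3+s from by omega),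
            ha (show K+1+(4*K+2+s) = 5*K+3+s from by omega),
            ha (show K+(4*K+2+s) = 5*K+2+s from by omega)] at B2
        have B3 := hrec' (2*K+2+s) (by omega)
        rw [ha (show 2*K+1+(2*K+2+s) = 4*K+3+s from by omega),
            ha (show 2*K+(2*K+2+s) = 4*K+2+s from by omega),
            ha (show 2*K+2+s+1 = 2*K+3+s from by omega),
            ha (show K+1+(2*K+2+s) = 3*K+3+s from by omega),
            ha (show K+(2*K+2+s) = 3*K+2+s from by omega)] at B3
        have B4 := hrec' (2+s) (by omega)
        rw [ha (show 2*K+1+(2+s) = 2*K+3+s from by omega),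
            ha (show 2*K+(2+s) = 2*K+2+s from by omega),
            ha (show 2+s+1 = 3+s from by omega),
            ha (show K+1+(2+s) = K+3+s from by omega),
            ha (show K+(2+s) = K+2+s from by omega)] at B4
        have IH1 := IH (2*K+2+s) (by omega) (by omega)
        rw [ha (show 6*K+(2*K+2+s) = 8*K+2+s from by omega),
            ha (show 4*K+(2*K+2+s) = 6*K+2+s from by omega),
            ha (show 2*K+(2*K+2+s) = 4*K+2+s from by omega)] at IH1
        have IH2 := IH (3+s) (by omega) (by omega)
        rw [ha (show 6*K+(3+s) = 6*K+3+s from by omega),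
            ha (show 4*K+(3+s) = 4*K+3+s from by omega),
            ha (show 2*K+(3+s) = 2*K+3+s from by omega)] at IH2
        have IH3 := IH (2+s) (by omega) (by omega)
        rw [ha (show 6*K+(2+s) = 6*K+2+s from by omega),
            ha (show 4*K+(2+s) = 4*K+2+s from by omega),
            ha (show 2*K+(2+s) = 2*K+2+s from by omega)] at IH3
        have IH4 := IH (K+3+s) (by omega) (by omega)
        rw [ha (show 6*K+(K+3+s) = 7*K+3+s from by omega),
            ha (show 4*K+(K+3+s) = 5*K+3+s from by omega),
            ha (show 2*K+(K+3+s) = 3*K+3+s from by omega)] at IH4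
        have IH5 := IH (K+2+s) (by omega) (by omega)
        rw [ha (show 6*K+(K+2+s) = 7*K+2+s from by omega),
            ha (show 4*K+(K+2+s) = 5*K+2+s from by omega),
            ha (show 2*K+(K+2+s) = 3*K+2+s from by omega)] at IH5
        have hD := hpos (6*K+2+s) (by omega)
        have key : a (8*K+3+s) * a (6*K+2+s)
            = ((2*(K:ℚ)^2 + 8*(K:ℚ) + 4)*(a (6*K+3+s) - a (4*K+3+s)) + a (2*K+3+s)) * a (6*K+2+s) := by
          linear_combination B1 + a (6*K+3+s) * IH1 - (2*(K:ℚ)^2 + 8*(K:ℚ) + 4) * B2 + IH4 + IH5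
            + a (2*K+2+s) * IH2 - a (2*K+3+s) * IH3 + (2*(K:ℚ)^2 + 8*(K:ℚ) + 4) * B3 - B4
        rw [ha (show 6*K+(2*K+3+s) = 8*K+3+s from by omega),
            ha (show 4*K+(2*K+3+s) = 6*K+3+s from by omega),
            ha (show 2*K+(2*K+3+s) = 4*K+3+s from by omega)]
        exact mul_right_cancel₀ (ne_of_gt hD) key
  intro n hn
  obtain ⟨m, hm2, rfl⟩ : ∃ m, 2 ≤ m ∧ n = 6*K+m := ⟨n-6*K, by omega, by omega⟩
  rw [show 6*K+m-2*K = 4*K+m from by omega, show 6*K+m-4*K = 2*K+m from by omega,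
      show 6*K+m-6*K = m from by omega]
  exact G m hm2
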